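/- Let w be metric weights on a finite set 𝒮, let T ⊆ 𝒮 with |T| = n ≥ 1, and let M be any perfect matching of 𝒮. Then w(M) ≤ (2/n)·Σ_{ {x,y} ⊆ T } w(x,y) + (1/n)·Σ_{ x ∈ T, y ∈ 𝒮∖T } w(x,y). -/

import Mathlib

/-- for metric weights `w` on a finite set `𝒮`, a subset `T` of size `n ≥ 1`,
and any perfect matching `M` of `𝒮` (encoded as a fixed-point-free involutive permutation
`σ`, with `w(M) = (Σ_x w(x, σ x))/2`):
`w(M) ≤ (2/n)·Σ_{{x,y}⊆T} w(x,y) + (1/n)·Σ_{x∈T, y∈𝒮∖T} w(x,y)`. -/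
theorem stmt_6 {S : Type*} [Fintype S] [DecidableEq S]
    (w : S → S → ℝ)
    (hnonneg : ∀ x y, 0 ≤ w x y)
    (hsymm : ∀ x y, w x y = w y x)
    (hmetric : ∀ x y z : S, x ≠ y → y ≠ z → x ≠ z → w x y ≤ w x z + w z y)
    (T : Finset S) (n : ℕ) (hT : T.card = n) (hn : 1 ≤ n)
    (σ : Equiv.Perm S) (hinv : ∀ x, σ (σ x) = x) (hfix : ∀ x, σ x ≠ x) :
    (∑ x, w x (σ x)) / 2
      ≤ (2 / (n : ℝ)) * ((∑ p ∈ T.offDiag, w p.1 p.2) / 2)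
        + (1 / (n : ℝ)) * (∑ x ∈ T, ∑ y ∈ Tᶜ, w x y) := by
  have hnpos : (0:ℝ) < n := by exact_mod_cast hn
  set E := ∑ p ∈ T.offDiag, w p.1 p.2 with hEdef
  set C := ∑ x ∈ T, ∑ y ∈ Tᶜ, w x y with hCdef
  -- pointwise triangle bound
  have step1 : ∀ x t : S, w x (σ x) ≤
      (if t ≠ x then w x t else 0) + (if t ≠ σ x then w t (σ x) else 0) := by
    intro x t
    by_cases h1 : t = x
    · subst h1
      have : t ≠ σ t := fun h => hfix t h.symm
      simp [this]
    · by_cases h2 : t = σ x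
      · subst h2
        simp [h1]
      · rw [if_pos h1, if_pos h2]
        have := hmetric x (σ x) t (fun h => hfix x h.symm) (fun h => h2 h.symm) (fun h => h1 h.symm)
        linarith
  -- sum over t ∈ T
  have step2 : ∀ x : S, (n:ℝ) * w x (σ x) ≤
      ∑ t ∈ T, ((if t ≠ x then w x t else 0) + (if t ≠ σ x then w t (σ x) else 0)) := by
    intro x
    calc (n:ℝ) * w x (σ x) = ∑ _t ∈ T, w x (σ x) := by
          rw [Finset.sum_const, hT, nsmul_eq_mul]
      _ ≤ _ := Finset.sum_le_sum fun t _ => step1 x t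
  have key : (n:ℝ) * ∑ x, w x (σ x) ≤ 2 * (E + C) := by
    have h3 : (n:ℝ) * ∑ x, w x (σ x) ≤
        ∑ x, ∑ t ∈ T, ((if t ≠ x then w x t else 0) + (if t ≠ σ x then w t (σ x) else 0)) := by
      rw [Finset.mul_sum]
      exact Finset.sum_le_sum fun x _ => step2 x
    have h4 : ∑ x, ∑ t ∈ T, ((if t ≠ x then w x t else 0) + (if t ≠ σ x then w t (σ x) else 0))
        = 2 * ∑ t ∈ T, ∑ x, (if t ≠ x then w t x else 0) := by
      rw [Finset.sum_comm]
      rw [Finset.mul_sum]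
      refine Finset.sum_congr rfl fun t _ => ?_
      rw [Finset.sum_add_distrib]
      have hA : ∑ x, (if t ≠ x then w x t else 0) = ∑ x, (if t ≠ x then w t x else 0) := by
        refine Finset.sum_congr rfl fun x _ => by rw [hsymm]
      have hB : ∑ x, (if t ≠ σ x then w t (σ x) else 0) = ∑ x, (if t ≠ x then w t x else 0) :=
        Equiv.sum_comp σ (fun y => if t ≠ y then w t y else 0)
      rw [hA, hB]; ring
    have h5 : ∑ t ∈ T, ∑ x, (if t ≠ x then w t x else 0) = E + C := by
      have hsplit : ∀ t ∈ T, ∑ x, (if t ≠ x then w t x else 0)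
          = (∑ x ∈ T, if t ≠ x then w t x else 0) + ∑ x ∈ Tᶜ, w t x := by
        intro t ht
        rw [← Finset.sum_add_sum_compl T]
        congr 1
        refine Finset.sum_congr rfl fun x hx => ?_
        rw [if_pos]
        rintro rfl
        exact (Finset.mem_compl.mp hx) ht
      rw [Finset.sum_congr rfl hsplit, Finset.sum_add_distrib]
      congr 1
      rw [hEdef, (show T.offDiag = (T ×ˢ T).filter (fun a => a.1 ≠ a.2) by ext; simp [and_assoc]), Finset.sum_filter, Finset.sum_product]
    linarith [h3, h4 ▸ h3, h5]
  have hfin : (∑ x, w x (σ x)) / 2 ≤ (E + C) / n := by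
    rw [div_le_div_iff₀ (by norm_num) hnpos]
    linarith
  calc (∑ x, w x (σ x)) / 2 ≤ (E + C) / n := hfin
    _ = (2 / (n : ℝ)) * (E / 2) + (1 / (n : ℝ)) * C := by field_simp
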